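/- arXiv:1412.8546 — 2 statements merged into one kernel-verified Lean document; each statement's English description precedes it below -/
import Mathlib

section
/- If R is an equivalence relation on Con, then the lifting of R to finite-support probability distributions via weight functions is an equivalence relation on the set of finite-support distributions on Con. -/
/-- A finite-support probability distribution. -/
structure FDist (Con : Type*) where
  toFun : Con → ℝ
  nonneg : ∀ c, 0 ≤ toFun c
  finite : (Function.support toFun).Finite
  sum_one : ∑ᶠ c, toFun c = 1

/-- `δ` is a weight function for `(μ, ν)` w.r.t. the relation `R`. -/
def IsWeight {Con : Type*} (R : Con → Con → Prop) (μ ν : FDist Con)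
    (δ : Con → Con → ℝ) : Prop :=
  (∀ c d, 0 ≤ δ c d ∧ δ c d ≤ 1) ∧
  (Function.support (Function.uncurry δ)).Finite ∧
  (∀ c, ∑ᶠ d, δ c d = μ.toFun c) ∧
  (∀ d, ∑ᶠ c, δ c d = ν.toFun d) ∧
  (∀ c d, 0 < δ c d → R c d)

/-- The lifting of a relation to finite-support distributions via weight functions. -/
def Lift {Con : Type*} (R : Con → Con → Prop) (μ ν : FDist Con) : Prop :=
  ∃ δ, IsWeight R μ ν δ

/-- The point (Dirac) distribution at `c`. -/
noncomputable def pointDist {Con : Type*} [DecidableEq Con] (c : Con) : FDist Con where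
  toFun x := if x = c then 1 else 0
  nonneg x := by (try dsimp); split <;> norm_num
  finite := Set.Finite.subset (Set.finite_singleton c) (fun x hx => by
    by_contra h
    simp only [Function.mem_support] at hx
    simp only [Set.mem_singleton_iff] at h
    simp [h] at hx)
  sum_one := by
    rw [finsum_eq_single _ c]
    · simp
    · intro x hx; simp [hx]

open Function

section Aux
variable {Con : Type*}

lemma fdist_le_one (μ : FDist Con) (c : Con) : μ.toFun c ≤ 1 := by
  rw [← μ.sum_one]
  exact single_le_finsum c μ.finite μ.nonneg

lemma row_support_finite (δ : Con → Con → ℝ)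
    (h : (support (uncurry δ)).Finite) (c : Con) :
    (support (fun d => δ c d)).Finite :=
  Set.Finite.subset (h.image Prod.snd) (fun d hd => ⟨(c, d), hd, rfl⟩)

lemma col_support_finite (δ : Con → Con → ℝ)
    (h : (support (uncurry δ)).Finite) (d : Con) :
    (support (fun c => δ c d)).Finite :=
  Set.Finite.subset (h.image Prod.fst) (fun c hc => ⟨(c, d), hc, rfl⟩)

lemma sum_le_finsum {f : Con → ℝ} (hf : (support f).Finite) (h0 : ∀ x, 0 ≤ f x)
    (s : Finset Con) : ∑ x ∈ s, f x ≤ ∑ᶠ x, f x := by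
  classical
  rw [finsum_eq_sum_of_support_subset f (s := s ∪ hf.toFinset) (by intro x hx; simp [hx])]
  exact Finset.sum_le_sum_of_subset_of_nonneg Finset.subset_union_left (fun i _ _ => h0 i)

end Aux
/-- If `R` is an equivalence relation, so is its lifting via weight functions. -/
theorem lift_equivalence {Con : Type*} (R : Con → Con → Prop)
    (hR : Equivalence R) :
    Equivalence (Lift R) := by
  constructor
  · -- reflexivity
    intro μ
    classical
    refine ⟨fun c d => if d = c then μ.toFun c else 0, ?_, ?_, ?_, ?_, ?_⟩
    · intro c d
      dsimp only
      constructor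
      · split
        · exact μ.nonneg c
        · exact le_refl 0
      · split
        · exact fdist_le_one μ c
        · norm_num
    · apply Set.Finite.subset (μ.finite.image (fun c => (c, c)))
      rintro ⟨c, d⟩ h
      simp only [Function.mem_support, Function.uncurry] at h
      have hdc : d = c := by by_contra hne; simp [hne] at h
      subst hdc
      refine ⟨d, ?_, rfl⟩
      simpa using h
    · intro c
      rw [finsum_eq_single _ c (by intro x hx; simp [hx])]
      simp
    · intro d
      rw [finsum_eq_single _ d (by intro x hx; simp only []; rw [if_neg (fun h : d = x => hx h.symm)])]
      simp
    · intro a b h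
      dsimp only at h
      have hdc : b = a := by by_contra hne; simp [hne] at h
      subst hdc
      exact hR.refl _
  · -- symmetry
    rintro μ ν ⟨δ, hb, hfin, hrow, hcol, hrel⟩
    refine ⟨fun d c => δ c d, fun c d => ⟨(hb d c).1, (hb d c).2⟩, ?_, hcol, hrow,
      fun c d h => hR.symm (hrel d c h)⟩
    apply Set.Finite.subset (hfin.image Prod.swap)
    rintro ⟨d, c⟩ h
    exact ⟨(c, d), h, rfl⟩
  · -- transitivity
    rintro μ ν ρ ⟨δ₁, hb₁, hfin₁, hrow₁, hcol₁, hrel₁⟩ ⟨δ₂, hb₂, hfin₂, hrow₂, hcol₂, hrel₂⟩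
    classical
    -- middle-coordinate finset
    set t : Finset Con := (hfin₁.image Prod.snd).toFinset ∪ (hfin₂.image Prod.fst).toFinset with ht
    have ht₁ : ∀ c : Con, support (fun d => δ₁ c d) ⊆ (t : Set Con) := by
      intro c d hd
      simp only [ht, Finset.coe_union, Set.mem_union, Set.Finite.coe_toFinset, Set.mem_image]
      exact Or.inl ⟨(c, d), hd, rfl⟩
    have ht₂ : ∀ e : Con, support (fun d => δ₂ d e) ⊆ (t : Set Con) := by
      intro e d hd
      simp only [ht, Finset.coe_union, Set.mem_union, Set.Finite.coe_toFinset, Set.mem_image]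
      exact Or.inr ⟨(d, e), hd, rfl⟩
    -- pointwise bounds via ν
    have h₁ν : ∀ c d, δ₁ c d ≤ ν.toFun d := by
      intro c d
      rw [← hcol₁ d]
      exact single_le_finsum c (col_support_finite δ₁ hfin₁ d) (fun j => (hb₁ j d).1)
    have h₂ν : ∀ d e, δ₂ d e ≤ ν.toFun d := by
      intro d e
      rw [← hrow₂ d]
      exact single_le_finsum e (row_support_finite δ₂ hfin₂ d) (fun j => (hb₂ d j).1)
    set δ₃ : Con → Con → ℝ := fun c e => ∑ d ∈ t, δ₁ c d * δ₂ d e / ν.toFun d with hδ₃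
    have hterm_nonneg : ∀ c e d, 0 ≤ δ₁ c d * δ₂ d e / ν.toFun d := by
      intro c e d
      apply div_nonneg (mul_nonneg (hb₁ c d).1 (hb₂ d e).1) (ν.nonneg d)
    have hfrac_le : ∀ c e d, δ₁ c d * δ₂ d e / ν.toFun d ≤ δ₁ c d := by
      intro c e d
      rcases eq_or_lt_of_le (ν.nonneg d) with h0 | h0
      · rw [← h0, div_zero]; exact (hb₁ c d).1
      · rw [div_le_iff₀ h0]
        exact mul_le_mul_of_nonneg_left (h₂ν d e) (hb₁ c d).1
    have h₃nonneg : ∀ c e, 0 ≤ δ₃ c e := fun c e =>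
      Finset.sum_nonneg fun d _ => hterm_nonneg c e d
    have h₃le_row : ∀ c e, δ₃ c e ≤ μ.toFun c := by
      intro c e
      calc δ₃ c e ≤ ∑ d ∈ t, δ₁ c d := Finset.sum_le_sum fun d _ => hfrac_le c e d
        _ ≤ ∑ᶠ d, δ₁ c d :=
          sum_le_finsum (row_support_finite δ₁ hfin₁ c) (fun d => (hb₁ c d).1) t
        _ = μ.toFun c := hrow₁ c
    -- support of δ₃
    have hsupp₃ : support (uncurry δ₃) ⊆
        (Prod.fst '' support (uncurry δ₁)) ×ˢ (Prod.snd '' support (uncurry δ₂)) := by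
      rintro ⟨c, e⟩ h
      simp only [mem_support, uncurry] at h
      obtain ⟨d, _, hd⟩ := Finset.exists_ne_zero_of_sum_ne_zero h
      have h1 : δ₁ c d ≠ 0 := fun h' => hd (by simp [h'])
      have h2 : δ₂ d e ≠ 0 := fun h' => hd (by simp [h'])
      exact ⟨⟨(c, d), h1, rfl⟩, ⟨(d, e), h2, rfl⟩⟩
    have hfin₃ : (support (uncurry δ₃)).Finite :=
      Set.Finite.subset (((hfin₁.image Prod.fst)).prod (hfin₂.image Prod.snd)) hsupp₃
    -- row sums
    have hdegenerate : ∀ c d, ν.toFun d = 0 → δ₁ c d = 0 := by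
      intro c d h0
      exact le_antisymm (h0 ▸ h₁ν c d) (hb₁ c d).1
    have hdegenerate₂ : ∀ d e, ν.toFun d = 0 → δ₂ d e = 0 := by
      intro d e h0
      exact le_antisymm (h0 ▸ h₂ν d e) (hb₂ d e).1
    have hrow₃ : ∀ c, ∑ᶠ e, δ₃ c e = μ.toFun c := by
      intro c
      have hsub : support (fun e => δ₃ c e) ⊆
          ((hfin₂.image Prod.snd).toFinset : Set Con) := by
        intro e he
        simp only [mem_support] at he
        obtain ⟨d, _, hd⟩ := Finset.exists_ne_zero_of_sum_ne_zero he
        have h2 : δ₂ d e ≠ 0 := fun h' => hd (by simp [h'])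
        simp only [Set.Finite.coe_toFinset]
        exact ⟨(d, e), h2, rfl⟩
      rw [finsum_eq_sum_of_support_subset _ hsub, hδ₃]
      rw [Finset.sum_comm]
      have : ∀ d ∈ t, ∑ e ∈ (hfin₂.image Prod.snd).toFinset, δ₁ c d * δ₂ d e / ν.toFun d
          = δ₁ c d := by
        intro d _
        rcases eq_or_ne (ν.toFun d) 0 with h0 | h0
        · simp [hdegenerate c d h0, h0]
        · have : ∑ e ∈ (hfin₂.image Prod.snd).toFinset, δ₂ d e = ν.toFun d := by
            rw [← finsum_eq_sum_of_support_subset _ (s := (hfin₂.image Prod.snd).toFinset)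
              (by intro e he; simp only [Set.Finite.coe_toFinset]; exact ⟨(d, e), he, rfl⟩)]
            exact hrow₂ d
          calc ∑ e ∈ (hfin₂.image Prod.snd).toFinset, δ₁ c d * δ₂ d e / ν.toFun d
              = (δ₁ c d / ν.toFun d) * ∑ e ∈ (hfin₂.image Prod.snd).toFinset, δ₂ d e := by
                rw [Finset.mul_sum]; congr 1; ext e; ring
            _ = (δ₁ c d / ν.toFun d) * ν.toFun d := by rw [this]
            _ = δ₁ c d := div_mul_cancel₀ _ h0
      rw [Finset.sum_congr rfl this,
        ← finsum_eq_sum_of_support_subset _ (ht₁ c), hrow₁ c]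
    have hcol₃ : ∀ e, ∑ᶠ c, δ₃ c e = ρ.toFun e := by
      intro e
      have hsub : support (fun c => δ₃ c e) ⊆
          ((hfin₁.image Prod.fst).toFinset : Set Con) := by
        intro c hc
        simp only [mem_support] at hc
        obtain ⟨d, _, hd⟩ := Finset.exists_ne_zero_of_sum_ne_zero hc
        have h1 : δ₁ c d ≠ 0 := fun h' => hd (by simp [h'])
        simp only [Set.Finite.coe_toFinset]
        exact ⟨(c, d), h1, rfl⟩
      rw [finsum_eq_sum_of_support_subset _ hsub]
      simp only [hδ₃]
      rw [Finset.sum_comm]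
      have : ∀ d ∈ t, ∑ c ∈ (hfin₁.image Prod.fst).toFinset, δ₁ c d * δ₂ d e / ν.toFun d
          = δ₂ d e := by
        intro d _
        rcases eq_or_ne (ν.toFun d) 0 with h0 | h0
        · simp [hdegenerate₂ d e h0, h0]
        · have : ∑ c ∈ (hfin₁.image Prod.fst).toFinset, δ₁ c d = ν.toFun d := by
            rw [← finsum_eq_sum_of_support_subset _ (s := (hfin₁.image Prod.fst).toFinset)
              (by intro c hc; simp only [Set.Finite.coe_toFinset]; exact ⟨(c, d), hc, rfl⟩)]
            exact hcol₁ d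
          calc ∑ c ∈ (hfin₁.image Prod.fst).toFinset, δ₁ c d * δ₂ d e / ν.toFun d
              = (δ₂ d e / ν.toFun d) * ∑ c ∈ (hfin₁.image Prod.fst).toFinset, δ₁ c d := by
                rw [Finset.mul_sum]; congr 1; ext c; ring
            _ = (δ₂ d e / ν.toFun d) * ν.toFun d := by rw [this]
            _ = δ₂ d e := div_mul_cancel₀ _ h0
      rw [Finset.sum_congr rfl this,
        ← finsum_eq_sum_of_support_subset _ (ht₂ e), hcol₂ e]
    refine ⟨δ₃, fun c e => ⟨h₃nonneg c e, le_trans (h₃le_row c e) (fdist_le_one μ c)⟩,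
      hfin₃, hrow₃, hcol₃, ?_⟩
    intro c e h
    have : ∃ d ∈ t, 0 < δ₁ c d * δ₂ d e / ν.toFun d := by
      by_contra hne
      push_neg at hne
      have : δ₃ c e = 0 := le_antisymm
        (Finset.sum_nonpos fun d hd => hne d hd) (h₃nonneg c e)
      exact absurd this (ne_of_gt h)
    obtain ⟨d, _, hd⟩ := this
    have h1 : 0 < δ₁ c d := by
      rcases lt_or_eq_of_le (hb₁ c d).1 with h' | h'
      · exact h'
      · exfalso; rw [← h'] at hd; simp at hd
    have h2 : 0 < δ₂ d e := by
      rcases lt_or_eq_of_le (hb₂ d e).1 with h' | h'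
      · exact h'
      · exfalso; rw [← h'] at hd; simp at hd
    exact hR.trans (hrel₁ c d h1) (hrel₂ d e h2)
end

section
/- The weak internal transition relation ⟹ on finite-support distributions is transitive: if μ ⟹ ν and ν ⟹ ξ then μ ⟹ ξ. -/
/-- A probabilistic labeled transition system with a distinguished silent action `τ`. -/
structure PLTS (Con Act : Type*) where
  trans : Con → Act → FDist Con → Prop
  tau : Act

/-- The weak internal transition relation `⟹` on finite-support distributions:
the smallest relation such that (1) `δ_C ⟹ δ_C`; (2) if `C →τ μ` and `μ ⟹ ν`
then `δ_C ⟹ ν`; (3) closure under convex combinations of point decompositions. -/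
inductive Weak {Con Act : Type*} [DecidableEq Con] (L : PLTS Con Act) :
    FDist Con → FDist Con → Prop
  | refl (C : Con) : Weak L (pointDist C) (pointDist C)
  | step {C : Con} {μ ν : FDist Con} :
      L.trans C L.tau μ → Weak L μ ν → Weak L (pointDist C) ν
  | mix {n : ℕ} (p : Fin n → ℝ) (C : Fin n → Con) (ν : Fin n → FDist Con)
      (μ ξ : FDist Con)
      (hp : ∀ i, 0 ≤ p i) (hs : ∑ i, p i = 1)
      (hμ : ∀ x, μ.toFun x = ∑ i, if C i = x then p i else 0)
      (hν : ∀ i, Weak L (pointDist (C i)) (ν i))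
      (hξ : ∀ x, ξ.toFun x = ∑ i, p i * (ν i).toFun x) :
      Weak L μ ξ


section Helpers

variable {Con : Type*}

lemma FDist.ext' {μ ν : FDist Con} (h : ∀ x, μ.toFun x = ν.toFun x) : μ = ν := by
  obtain ⟨f, _, _, _⟩ := μ
  obtain ⟨g, _, _, _⟩ := ν
  have hfg : f = g := funext h
  subst hfg
  rfl

lemma FDist.sum_eq_one (μ : FDist Con) {s : Finset Con}
    (h : Function.support μ.toFun ⊆ ↑s) : ∑ x ∈ s, μ.toFun x = 1 := by
  rw [← finsum_eq_finset_sum_of_support_subset _ h, μ.sum_one]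

/-- Convex combination of finitely many finite-support distributions. -/
noncomputable def mixDist {m : ℕ} (w : Fin m → ℝ) (ρ : Fin m → FDist Con)
    (hw : ∀ j, 0 ≤ w j) (hs : ∑ j, w j = 1) : FDist Con where
  toFun x := ∑ j, w j * (ρ j).toFun x
  nonneg x := Finset.sum_nonneg fun j _ => mul_nonneg (hw j) ((ρ j).nonneg x)
  finite := by
    apply Set.Finite.subset (Set.finite_iUnion fun j : Fin m => (ρ j).finite)
    intro x hx
    simp only [Function.mem_support] at hx
    by_contra hc
    simp only [Set.mem_iUnion, Function.mem_support, not_exists, not_not] at hc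
    exact hx (Finset.sum_eq_zero fun j _ => by rw [hc j, mul_zero])
  sum_one := by
    classical
    have hsub : Function.support (fun x => ∑ j, w j * (ρ j).toFun x) ⊆
        ↑(Finset.univ.biUnion fun j : Fin m => (ρ j).finite.toFinset) := by
      intro x hx
      simp only [Function.mem_support] at hx
      by_contra hc
      apply hx
      apply Finset.sum_eq_zero
      intro j _
      have hz : (ρ j).toFun x = 0 := by
        by_contra h0
        exact hc (by
          simp only [Finset.coe_biUnion, Finset.coe_univ, Set.mem_iUnion,
            Set.Finite.coe_toFinset, Function.mem_support]
          exact ⟨j, trivial, h0⟩)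
      rw [hz, mul_zero]
    rw [finsum_eq_finset_sum_of_support_subset _ hsub, Finset.sum_comm]
    have : ∀ j : Fin m, ∑ x ∈ (Finset.univ.biUnion fun j : Fin m => (ρ j).finite.toFinset),
        w j * (ρ j).toFun x = w j := by
      intro j
      rw [← Finset.mul_sum, (ρ j).sum_eq_one, mul_one]
      intro x hx
      simp only [Finset.coe_biUnion, Finset.coe_univ, Set.mem_iUnion,
        Set.Finite.coe_toFinset]
      exact ⟨j, trivial, hx⟩
    rw [Finset.sum_congr rfl fun j _ => this j, hs]

@[simp] lemma mixDist_toFun {m : ℕ} (w : Fin m → ℝ) (ρ : Fin m → FDist Con)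
    (hw : ∀ j, 0 ≤ w j) (hs : ∑ j, w j = 1) (x : Con) :
    (mixDist w ρ hw hs).toFun x = ∑ j, w j * (ρ j).toFun x := rfl

variable {Act : Type*} [DecidableEq Con] {L : PLTS Con Act}

/-- `⟹` is reflexive. -/
lemma weak_refl (L : PLTS Con Act) (μ : FDist Con) : Weak L μ μ := by
  classical
  set S := μ.finite.toFinset with hS
  have e : Fin S.card ≃ {x // x ∈ S} := S.equivFin.symm
  have hmem : ∀ x, x ∉ S → μ.toFun x = 0 := by
    intro x hx
    by_contra h0
    exact hx (by rw [hS]; exact (Set.Finite.mem_toFinset _).mpr h0)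
  have key : ∀ x, (∑ i, if ((e i : Con)) = x then μ.toFun (e i) else 0) = μ.toFun x := by
    intro x
    rw [Equiv.sum_comp e (fun c : {y // y ∈ S} => if (c : Con) = x then μ.toFun c else 0),
      Finset.sum_coe_sort S (fun c => if c = x then μ.toFun c else 0),
      Finset.sum_ite_eq' S x (fun c => μ.toFun c)]
    split
    · rfl
    · exact (hmem x (by assumption)).symm
  apply Weak.mix (fun i => μ.toFun (e i)) (fun i => (e i : Con))
      (fun i => pointDist (e i)) μ μ
  · intro i; exact μ.nonneg _
  · rw [Equiv.sum_comp e (fun c : {y // y ∈ S} => μ.toFun c),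
      Finset.sum_coe_sort S (fun c => μ.toFun c)]
    apply μ.sum_eq_one
    rw [hS]; rw [Set.Finite.coe_toFinset]
  · intro x; exact (key x).symm
  · intro i; exact Weak.refl _
  · intro x
    rw [← key x]
    apply Finset.sum_congr rfl
    intro i _
    simp only [pointDist]
    by_cases h : (e i : Con) = x
    · simp [h]
    · rw [if_neg h, if_neg (fun hh => h hh.symm), mul_zero]

/-- Decomposition: if `μ = Σ pᵢ νᵢ` and `μ ⟹ ξ`, then `ξ = Σ pᵢ ρᵢ` with `νᵢ ⟹ ρᵢ`. -/
lemma weak_decomp {μ ξ : FDist Con} (h : Weak L μ ξ) :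
    ∀ {n : ℕ} (p : Fin n → ℝ) (ν : Fin n → FDist Con), (∀ i, 0 ≤ p i) →
    (∑ i, p i = 1) → (∀ x, μ.toFun x = ∑ i, p i * (ν i).toFun x) →
    ∃ ρ : Fin n → FDist Con, (∀ i, Weak L (ν i) (ρ i)) ∧
      ∀ x, ξ.toFun x = ∑ i, p i * (ρ i).toFun x := by
  classical
  have point_case : ∀ (C : Con) {n : ℕ} (p : Fin n → ℝ) (ν : Fin n → FDist Con),
      (∀ i, 0 ≤ p i) → (∀ x, (pointDist C).toFun x = ∑ i, p i * (ν i).toFun x) →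
      ∀ i, 0 < p i → ν i = pointDist C := by
    intro C n p ν hp hdec i hpi
    apply FDist.ext'
    have hzero : ∀ x, x ≠ C → (ν i).toFun x = 0 := by
      intro x hx
      have h0 : (0:ℝ) = ∑ k, p k * (ν k).toFun x := by
        have := hdec x
        simpa [pointDist, hx] using this
      have := (Finset.sum_eq_zero_iff_of_nonneg
        (fun k _ => mul_nonneg (hp k) ((ν k).nonneg x))).mp h0.symm i (Finset.mem_univ i)
      rcases mul_eq_zero.mp this with h | h
      · exact absurd h (ne_of_gt hpi)
      · exact h
    have hC : (ν i).toFun C = 1 := by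
      have := (ν i).sum_one
      rwa [finsum_eq_single _ C (fun x hx => hzero x hx)] at this
    intro x
    by_cases hx : x = C
    · subst hx; simp [pointDist, hC]
    · simp [pointDist, hx, hzero x hx]
  intro n p ν hp hps hdec
  cases h with
  | refl C =>
    exact ⟨ν, fun i => weak_refl L (ν i), hdec⟩
  | step htr hw =>
    rename_i C μ'
    refine ⟨fun i => if 0 < p i then ξ else ν i, ?_, ?_⟩
    · intro i
      by_cases hpi : 0 < p i
      · simp only [hpi, if_true]
        rw [point_case C p ν hp hdec i hpi]
        exact Weak.step htr hw
      · simp only [hpi, if_false]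
        exact weak_refl L (ν i)
    · intro x
      have : ∀ i : Fin n, p i * (if 0 < p i then ξ else ν i).toFun x = p i * ξ.toFun x := by
        intro i
        by_cases hpi : 0 < p i
        · rw [if_pos hpi]
        · have : p i = 0 := le_antisymm (not_lt.mp hpi) (hp i)
          rw [this, zero_mul, zero_mul]
      rw [Finset.sum_congr rfl fun i _ => this i, ← Finset.sum_mul, hps, one_mul]
  | @mix m q D ρ _ _ hq hqs hμD hρ hξρ =>
    -- g i c = νᵢ c / μ c (0 if μ c = 0)
    set g : Fin n → Con → ℝ := fun i c => if μ.toFun c = 0 then 0 else (ν i).toFun c / μ.toFun c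
      with hg
    set w : Fin n → Fin m → ℝ := fun i j => q j * g i (D j) with hw
    have hμnn : ∀ c, 0 ≤ μ.toFun c := μ.nonneg
    have hgnn : ∀ i c, 0 ≤ g i c := by
      intro i c
      rw [hg]
      dsimp only
      split
      · exact le_refl 0
      · exact div_nonneg ((ν i).nonneg c) (hμnn c)
    have hwnn : ∀ i j, 0 ≤ w i j := fun i j => mul_nonneg (hq j) (hgnn i (D j))
    -- supp νᵢ ⊆ supp μ for pᵢ > 0
    have hsupp : ∀ i, 0 < p i → ∀ c, μ.toFun c = 0 → (ν i).toFun c = 0 := by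
      intro i hpi c hc
      have h0 : (0:ℝ) = ∑ k, p k * (ν k).toFun c := by rw [← hdec c, hc]
      have := (Finset.sum_eq_zero_iff_of_nonneg
        (fun k _ => mul_nonneg (hp k) ((ν k).nonneg c))).mp h0.symm i (Finset.mem_univ i)
      rcases mul_eq_zero.mp this with h | h
      · exact absurd h (ne_of_gt hpi)
      · exact h
    -- q j = 0 when μ (D j) = 0
    have hq0 : ∀ j, μ.toFun (D j) = 0 → q j = 0 := by
      intro j hj
      have hle : q j ≤ μ.toFun (D j) := by
        rw [hμD (D j)]
        have := Finset.single_le_sum (f := fun k => if D k = D j then q k else 0)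
          (fun k _ => by split; exacts [hq k, le_refl 0]) (Finset.mem_univ j)
        simpa using this
      exact le_antisymm (hj ▸ hle) (hq j)
    -- key: μ c * g i c = νᵢ c when pᵢ > 0
    have hkey : ∀ i, 0 < p i → ∀ c, μ.toFun c * g i c = (ν i).toFun c := by
      intro i hpi c
      rw [hg]; dsimp only
      by_cases hc : μ.toFun c = 0
      · rw [if_pos hc, mul_zero, hsupp i hpi c hc]
      · rw [if_neg hc, mul_div_cancel₀ _ hc]
    -- the hμ condition for the inner mix
    have hmu : ∀ i, 0 < p i → ∀ x, (ν i).toFun x = ∑ j, if D j = x then w i j else 0 := by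
      intro i hpi x
      have : ∀ j : Fin m, (if D j = x then w i j else 0)
          = (if D j = x then q j else 0) * g i x := by
        intro j
        by_cases hj : D j = x
        · rw [if_pos hj, if_pos hj, hw]; dsimp only; rw [hj]
        · rw [if_neg hj, if_neg hj, zero_mul]
      rw [Finset.sum_congr rfl fun j _ => this j, ← Finset.sum_mul, ← hμD x,
        hkey i hpi x]
    -- sum of weights is 1 when pᵢ > 0
    have hwsum : ∀ i, 0 < p i → ∑ j, w i j = 1 := by
      intro i hpi
      set T : Finset Con := Finset.image D Finset.univ ∪ (ν i).finite.toFinset with hT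
      have h1 : ∀ j : Fin m, w i j = ∑ x ∈ T, (if x = D j then q j else 0) * g i x := by
        intro j
        have he : ∑ x ∈ T, (if x = D j then q j else 0) * g i x
            = ∑ x ∈ T, if x = D j then q j * g i x else 0 := by
          apply Finset.sum_congr rfl; intro x _
          by_cases hx : x = D j
          · rw [if_pos hx, if_pos hx, hx]
          · rw [if_neg hx, if_neg hx, zero_mul]
        rw [he, Finset.sum_ite_eq' T (D j) (fun x => q j * g i x),
          if_pos (Finset.mem_union_left _ (Finset.mem_image.mpr ⟨j, Finset.mem_univ j, rfl⟩))]
      rw [Finset.sum_congr rfl fun j _ => h1 j, Finset.sum_comm]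
      have h2 : ∀ x : Con, (∑ j, (if x = D j then q j else 0) * g i x) = (ν i).toFun x := by
        intro x
        rw [← Finset.sum_mul]
        have hm : (∑ j, if x = D j then q j else 0) = μ.toFun x := by
          rw [hμD x]
          exact Finset.sum_congr rfl fun j _ => if_congr eq_comm rfl rfl
        rw [hm, hkey i hpi x]
      rw [Finset.sum_congr rfl fun x _ => h2 x]
      apply (ν i).sum_eq_one
      intro x hx
      exact Finset.mem_coe.mpr (Finset.mem_union_right _ ((Set.Finite.mem_toFinset _).mpr hx))
    refine ⟨fun i => if h : 0 < p i then mixDist (w i) ρ (hwnn i) (hwsum i h) else ν i,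
      ?_, ?_⟩
    · intro i
      dsimp only
      by_cases hpi : 0 < p i
      · rw [dif_pos hpi]
        exact Weak.mix (w i) D ρ (ν i) _ (hwnn i) (hwsum i hpi) (hmu i hpi) hρ
          (fun x => rfl)
      · rw [dif_neg hpi]
        exact weak_refl L (ν i)
    · intro x
      dsimp only
      have hterm : ∀ i : Fin n,
          p i * (if h : 0 < p i then mixDist (w i) ρ (hwnn i) (hwsum i h) else ν i).toFun x
          = ∑ j, p i * (w i j * (ρ j).toFun x) := by
        intro i
        by_cases hpi : 0 < p i
        · rw [dif_pos hpi, mixDist_toFun, Finset.mul_sum]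
        · have hp0 : p i = 0 := le_antisymm (not_lt.mp hpi) (hp i)
          rw [dif_neg hpi, hp0]
          simp
      rw [Finset.sum_congr rfl fun i _ => hterm i, Finset.sum_comm]
      rw [hξρ x]
      apply Finset.sum_congr rfl
      intro j _
      -- ∑ i, p i * (w i j * ρ j x) = q j * ρ j x
      have : ∀ i : Fin n, p i * (w i j * (ρ j).toFun x)
          = (p i * g i (D j)) * (q j * (ρ j).toFun x) := by
        intro i; rw [hw]; dsimp only; ring
      rw [Finset.sum_congr rfl fun i _ => this i, ← Finset.sum_mul]
      by_cases hc : μ.toFun (D j) = 0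
      · rw [hq0 j hc]
        have : ∀ i : Fin n, p i * g i (D j) = 0 := by
          intro i; rw [hg]; dsimp only; rw [if_pos hc, mul_zero]
        rw [Finset.sum_congr rfl fun i _ => this i]
        simp
      · have : ∀ i : Fin n, p i * g i (D j) = p i * (ν i).toFun (D j) / μ.toFun (D j) := by
          intro i; rw [hg]; dsimp only; rw [if_neg hc]; ring
        rw [Finset.sum_congr rfl fun i _ => this i, ← Finset.sum_div, ← hdec (D j),
          div_self hc, one_mul]

end Helpers

/-- The weak internal transition relation `⟹` is transitive. -/
theorem weak_trans {Con Act : Type*} [DecidableEq Con] (L : PLTS Con Act)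
    (μ ν ξ : FDist Con) (h1 : Weak L μ ν) (h2 : Weak L ν ξ) : Weak L μ ξ := by
  induction h1 generalizing ξ with
  | refl C => exact h2
  | step htr _ ih => exact Weak.step htr (ih ξ h2)
  | mix p C ν' μ' ξ' hp hs hμ hν hξ ih =>
    obtain ⟨ρ, hρ, hsum⟩ := weak_decomp h2 p ν' hp hs hξ
    exact Weak.mix p C ρ μ' ξ hp hs hμ (fun i => ih i (ρ i) (hρ i)) hsum
end
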